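/- arXiv:1511.05825 — 5 statements merged into one kernel-verified Lean document; each statement's English description precedes it below -/
import Mathlib

section
/- Let S = ℚ[X₁, X₂, …] with derivation D₊ defined by D₊(Xᵢ) = i X_{i+1}. Define Λ₀ = 1 and Λ_k = (1/k!)·(D₊ + L_{X₁})^{k−1}(X₁) for k ≥ 1, where L_{X₁} is multiplication by X₁. Then for every k ≥ 0, the operator identity (L_{X₁} + D₊)^k / k! = Σ_{s=0}^{k} L_{Λ_s} ∘ (D₊^{k−s}/(k−s)!) holds as linear maps on S. -/
open MvPolynomial

lemma mulLeft_smul' (c : ℚ) (p : MvPolynomial ℕ+ ℚ) :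
    LinearMap.mulLeft ℚ (c • p) = c • LinearMap.mulLeft ℚ p := by
  ext q
  simp [smul_mul_assoc]

/-- Garland's operator identity: with `S = ℚ[X₁, X₂, …]`, `D₊` the derivation with
`D₊(Xᵢ) = iX_{i+1}`, `L` multiplication by `X₁`, `Λ₀ = 1` and
`Λ_k = (1/k!)(D₊ + L)^{k−1}(X₁)` for `k ≥ 1`, one has for every `k ≥ 0` the identity
`(L + D₊)^k / k! = ∑_{s=0}^{k} L_{Λ_s} ∘ (D₊^{k−s}/(k−s)!)` of linear maps on `S`. -/
theorem stmt4 (D : Derivation ℚ (MvPolynomial ℕ+ ℚ) (MvPolynomial ℕ+ ℚ))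
    (hD : ∀ i : ℕ+, D (X i) = ((i : ℕ) : ℚ) • X (i + 1))
    (Λ : ℕ → MvPolynomial ℕ+ ℚ)
    (hΛ0 : Λ 0 = 1)
    (hΛ : ∀ k : ℕ, 1 ≤ k → Λ k = (Nat.factorial k : ℚ)⁻¹ •
      (((LinearMap.mulLeft ℚ (X 1) + D.toLinearMap :
          Module.End ℚ (MvPolynomial ℕ+ ℚ)) ^ (k - 1)) (X 1)))
    (k : ℕ) :
    (Nat.factorial k : ℚ)⁻¹ •
        ((LinearMap.mulLeft ℚ (X 1) + D.toLinearMap :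
          Module.End ℚ (MvPolynomial ℕ+ ℚ)) ^ k) =
      ∑ s ∈ Finset.range (k + 1),
        (Nat.factorial (k - s) : ℚ)⁻¹ •
          (LinearMap.mulLeft ℚ (Λ s) ∘ₗ
            ((D.toLinearMap : Module.End ℚ (MvPolynomial ℕ+ ℚ)) ^ (k - s))) := by
  set A : Module.End ℚ (MvPolynomial ℕ+ ℚ) :=
    LinearMap.mulLeft ℚ (X 1) + D.toLinearMap with hA
  -- key recursion: A Λ_s = (s+1) • Λ_{s+1}
  have key : ∀ s : ℕ, A (Λ s) = ((s + 1 : ℕ) : ℚ) • Λ (s + 1) := by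
    intro s
    cases s with
    | zero =>
      rw [hΛ 1 le_rfl, hΛ0]
      simp [hA, LinearMap.mulLeft_apply]
    | succ n =>
      rw [hΛ (n + 1) (by omega), hΛ (n + 2) (by omega)]
      simp only [Nat.add_sub_cancel]
      rw [map_smul]
      have h1 : (A ^ (n + 2 - 1)) (X 1) = A ((A ^ n) (X 1)) := by
        rw [show n + 2 - 1 = n + 1 from rfl, pow_succ']; rfl
      rw [h1, smul_smul]
      congr 1
      have h2 : ((n + 2).factorial : ℚ) = ((n + 2 : ℕ) : ℚ) * ((n + 1).factorial : ℚ) := by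
        rw [Nat.factorial_succ]; push_cast; ring
      rw [h2, mul_inv]
      have hne : ((n + 2 : ℕ) : ℚ) ≠ 0 := by positivity
      field_simp
  -- Leibniz at the operator level
  have comm : ∀ p : MvPolynomial ℕ+ ℚ, A * LinearMap.mulLeft ℚ p =
      LinearMap.mulLeft ℚ (A p) + LinearMap.mulLeft ℚ p * D.toLinearMap := by
    intro p
    refine LinearMap.ext fun q => ?_
    simp only [hA, Module.End.mul_apply, LinearMap.add_apply, LinearMap.mulLeft_apply,
      Derivation.coeFn_coe, Derivation.leibniz, smul_eq_mul]
    ring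
  induction k with
  | zero =>
    simp [hΛ0, LinearMap.mulLeft_one]
  | succ k ih =>
    set T : ℕ → Module.End ℚ (MvPolynomial ℕ+ ℚ) := fun s =>
      (Nat.factorial (k + 1 - s) : ℚ)⁻¹ •
        (LinearMap.mulLeft ℚ (Λ s) ∘ₗ (D.toLinearMap ^ (k + 1 - s))) with hT
    have step : A * (∑ s ∈ Finset.range (k + 1),
        (Nat.factorial (k - s) : ℚ)⁻¹ •
          (LinearMap.mulLeft ℚ (Λ s) ∘ₗ (D.toLinearMap ^ (k - s))))
        = ((k + 1 : ℕ) : ℚ) • ∑ s ∈ Finset.range (k + 2), T s := by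
      rw [Finset.mul_sum]
      have hterm : ∀ s ∈ Finset.range (k + 1),
          A * ((Nat.factorial (k - s) : ℚ)⁻¹ •
            (LinearMap.mulLeft ℚ (Λ s) ∘ₗ (D.toLinearMap ^ (k - s))))
          = ((s + 1 : ℕ) : ℚ) • T (s + 1) + ((k + 1 - s : ℕ) : ℚ) • T s := by
        intro s hs
        rw [Finset.mem_range] at hs
        have hks : k + 1 - (s + 1) = k - s := by omega
        have hks2 : k + 1 - s = (k - s) + 1 := by omega
        have hfaceq : ((k - s + 1 : ℕ) : ℚ) * (((k - s + 1).factorial : ℚ))⁻¹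
            = (((k - s).factorial : ℚ))⁻¹ := by
          rw [Nat.factorial_succ]
          push_cast
          rw [mul_inv, ← mul_assoc, mul_inv_cancel₀ (by positivity), one_mul]
        simp only [hT, hks, hks2, ← Module.End.mul_eq_comp]
        conv_lhs => rw [mul_smul_comm, ← mul_assoc, comm, key s, mulLeft_smul',
          add_mul, smul_mul_assoc, smul_add, smul_smul, mul_assoc, ← pow_succ']
        conv_rhs => rw [smul_smul, smul_smul, hfaceq]
        push_cast
        ring_nf
      rw [Finset.sum_congr rfl hterm, Finset.sum_add_distrib]
      have e1 : ∑ s ∈ Finset.range (k + 1), ((s + 1 : ℕ) : ℚ) • T (s + 1)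
          = ∑ s ∈ Finset.range (k + 2), ((s : ℕ) : ℚ) • T s := by
        rw [Finset.sum_range_succ' (fun s => ((s : ℕ) : ℚ) • T s) (k + 1)]
        simp
      have e2 : ∑ s ∈ Finset.range (k + 1), ((k + 1 - s : ℕ) : ℚ) • T s
          = ∑ s ∈ Finset.range (k + 2), ((k + 1 - s : ℕ) : ℚ) • T s := by
        conv_rhs => rw [Finset.sum_range_succ]
        simp
      rw [e1, e2, ← Finset.sum_add_distrib, Finset.smul_sum]
      refine Finset.sum_congr rfl fun s hs => ?_
      rw [Finset.mem_range] at hs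
      rw [← add_smul]
      congr 1
      have hcast : ((k + 1 - s : ℕ) : ℚ) = ((k + 1 : ℕ) : ℚ) - (s : ℚ) := by
        push_cast [Nat.cast_sub (by omega : s ≤ k + 1)]
        ring
      rw [hcast]
      push_cast
      ring
    have hfact : (((k + 1).factorial : ℚ))⁻¹
        = (((k + 1 : ℕ) : ℚ))⁻¹ * ((k.factorial : ℚ))⁻¹ := by
      rw [Nat.factorial_succ]
      push_cast
      rw [mul_inv]
    have hne : ((k + 1 : ℕ) : ℚ) ≠ 0 := by positivity
    have hpow : A ^ (k + 1) = A * A ^ k := by rw [pow_succ']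
    rw [hpow, hfact, mul_smul, ← mul_smul_comm, ih, step, smul_smul,
      inv_mul_cancel₀ hne, one_smul]
end

section
/- With S = ℚ[X₁, X₂, …], D₊ the derivation with D₊(Xᵢ) = iX_{i+1}, Λ₀ = 1 and Λ_k = (1/k!)(D₊ + L_{X₁})^{k−1}(X₁): for every k ≥ 1, the recursion Λ_k = (1/k)·Σ_{s=0}^{k−1} Λ_s · X_{k−s} holds in S. -/
open MvPolynomial

/-- `X n` as a total function of `n : ℕ`, zero for `n = 0`. -/
noncomputable def px (n : ℕ) : MvPolynomial ℕ+ ℚ :=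
  if h : 0 < n then X ⟨n, h⟩ else 0

lemma px_pos {n : ℕ} (h : 0 < n) : px n = X ⟨n, h⟩ := dif_pos h

lemma D_px (D : Derivation ℚ (MvPolynomial ℕ+ ℚ) (MvPolynomial ℕ+ ℚ))
    (hD : ∀ i : ℕ+, D (X i) = ((i : ℕ) : ℚ) • X (i + 1))
    {n : ℕ} (h : 0 < n) : D (px n) = ((n : ℕ) : ℚ) • px (n + 1) := by
  rw [px_pos h, hD ⟨n, h⟩, px_pos (Nat.succ_pos n)]
  congr 1

section aux

variable (D : Derivation ℚ (MvPolynomial ℕ+ ℚ) (MvPolynomial ℕ+ ℚ))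
    (Λ : ℕ → MvPolynomial ℕ+ ℚ)
    (hΛ0 : Λ 0 = 1)
    (hΛ : ∀ k : ℕ, 1 ≤ k → Λ k = (Nat.factorial k : ℚ)⁻¹ •
      (((LinearMap.mulLeft ℚ (X 1) + D.toLinearMap :
          Module.End ℚ (MvPolynomial ℕ+ ℚ)) ^ (k - 1)) (X 1)))

local notation "E" => (LinearMap.mulLeft ℚ (X (1 : ℕ+)) + D.toLinearMap :
    Module.End ℚ (MvPolynomial ℕ+ ℚ))

lemma E_one : (E) 1 = X (1 : ℕ+) := by
  simp [LinearMap.add_apply, LinearMap.mulLeft_apply]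

include hΛ0 hΛ in
lemma lamA : ∀ k, Λ k = (Nat.factorial k : ℚ)⁻¹ • ((E ^ k) 1) := by
  intro k
  cases k with
  | zero => simp [hΛ0]
  | succ n =>
    rw [hΛ (n + 1) (Nat.le_add_left 1 n)]
    have h1 : (E ^ (n + 1)) 1 = (E ^ n) (X (1 : ℕ+)) := by
      rw [pow_succ, Module.End.mul_apply, E_one]
    rw [Nat.add_sub_cancel, h1]

include hΛ0 hΛ in
lemma lamB : ∀ k : ℕ, ((k : ℚ) + 1) • Λ (k + 1) = X (1 : ℕ+) * Λ k + D (Λ k) := by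
  intro k
  have hA := lamA D Λ hΛ0 hΛ
  have hk : (E ^ k) 1 = (Nat.factorial k : ℚ) • Λ k := by
    rw [hA k, smul_smul, mul_inv_cancel₀ (by exact_mod_cast Nat.factorial_ne_zero k), one_smul]
  have h1 : (E ^ (k + 1)) 1 = (E) ((E ^ k) 1) := by
    rw [pow_succ', Module.End.mul_apply]
  have h2 : Λ (k + 1) = (Nat.factorial (k + 1) : ℚ)⁻¹ • (Nat.factorial k : ℚ) • ((E) (Λ k)) := by
    rw [hA (k + 1), h1, hk, map_smul]
  have h3 : ((k : ℚ) + 1) • Λ (k + 1) = (E) (Λ k) := by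
    rw [h2, smul_smul, smul_smul]
    have hf : ((k : ℚ) + 1) * (Nat.factorial (k + 1) : ℚ)⁻¹ * (Nat.factorial k : ℚ) = 1 := by
      rw [Nat.factorial_succ]
      have h0 : ((Nat.factorial k : ℚ)) ≠ 0 := by exact_mod_cast Nat.factorial_ne_zero k
      push_cast
      field_simp
    rw [hf, one_smul]
  rw [h3]
  simp [LinearMap.add_apply, LinearMap.mulLeft_apply]

include hΛ0 hΛ in
lemma lamC (hD : ∀ i : ℕ+, D (X i) = ((i : ℕ) : ℚ) • X (i + 1)) :
    ∀ k : ℕ, (k : ℚ) • Λ k = ∑ s ∈ Finset.range k, Λ s * px (k - s) := by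
  intro k
  induction k with
  | zero => simp
  | succ k ih =>
    have hB := lamB D Λ hΛ0 hΛ
    have hDΛ : ∀ s : ℕ, D (Λ s) = ((s : ℚ) + 1) • Λ (s + 1) - X (1 : ℕ+) * Λ s := by
      intro s
      rw [hB s]; ring
    have hk0 : ((k : ℚ) + 1) • Λ (k + 1) = X (1 : ℕ+) * Λ k + D (Λ k) := hB k
    rcases Nat.eq_zero_or_pos k with rfl | hkpos
    · have h1 := hB 0
      simp only [hΛ0, Nat.cast_zero, zero_add, one_smul, mul_one,
        Derivation.map_one_eq_zero, add_zero] at h1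
      norm_num [Finset.sum_range_one, hΛ0, h1, px_pos Nat.one_pos]
    · have hkQ : (k : ℚ) ≠ 0 := Nat.cast_ne_zero.mpr hkpos.ne'
      have key : (k : ℚ) • (((k : ℚ) + 1) • Λ (k + 1)) =
          (k : ℚ) • ∑ s ∈ Finset.range (k + 1), Λ s * px (k + 1 - s) := by
        rw [hk0, smul_add]
        have e1 : (k : ℚ) • (X (1 : ℕ+) * Λ k) =
            X (1 : ℕ+) * ∑ s ∈ Finset.range k, Λ s * px (k - s) := by
          rw [← ih, mul_smul_comm]
        have e2 : (k : ℚ) • (D (Λ k)) = D (∑ s ∈ Finset.range k, Λ s * px (k - s)) := by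
          rw [← ih, Derivation.map_smul]
        rw [e1, e2, map_sum, Finset.mul_sum, ← Finset.sum_add_distrib]
        have term : ∀ s ∈ Finset.range k,
            X (1 : ℕ+) * (Λ s * px (k - s)) + D (Λ s * px (k - s)) =
            ((s : ℚ) + 1) • (Λ (s + 1) * px (k - s)) +
              ((k - s : ℕ) : ℚ) • (Λ s * px (k + 1 - s)) := by
          intro s hs
          have hs' : s < k := Finset.mem_range.mp hs
          have hpos : 0 < k - s := Nat.sub_pos_of_lt hs'
          have hre : k - s + 1 = k + 1 - s := by omega
          rw [Derivation.leibniz, hDΛ s, D_px D hD hpos, hre]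
          simp only [smul_eq_mul, smul_eq_C_mul]
          ring
        rw [Finset.sum_congr rfl term, Finset.sum_add_distrib]
        have s1 : ∑ s ∈ Finset.range k, ((s : ℚ) + 1) • (Λ (s + 1) * px (k - s)) =
            ∑ t ∈ Finset.range (k + 1), (t : ℚ) • (Λ t * px (k + 1 - t)) := by
          rw [Finset.sum_range_succ']
          simp only [Nat.cast_zero, zero_smul, add_zero]
          apply Finset.sum_congr rfl
          intro s _
          rw [show k + 1 - (s + 1) = k - s from by omega]
          push_cast
          rfl
        have s2 : ∑ s ∈ Finset.range k, ((k - s : ℕ) : ℚ) • (Λ s * px (k + 1 - s)) =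
            ∑ s ∈ Finset.range (k + 1), ((k - s : ℕ) : ℚ) • (Λ s * px (k + 1 - s)) := by
          rw [Finset.sum_range_succ]
          simp
        rw [s1, s2, ← Finset.sum_add_distrib, Finset.smul_sum]
        apply Finset.sum_congr rfl
        intro s hs
        have hs' : s ≤ k := by have := Finset.mem_range.mp hs; omega
        rw [← add_smul, Nat.cast_sub hs']
        ring_nf
      have hfin := congrArg (fun z : MvPolynomial ℕ+ ℚ => (k : ℚ)⁻¹ • z) key
      simp only [smul_smul, ← mul_assoc, inv_mul_cancel₀ hkQ, one_mul, one_smul] at hfin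
      push_cast
      exact hfin

end aux

/-- With `S = ℚ[X₁, X₂, …]`, `D₊` the derivation with `D₊(Xᵢ) = iX_{i+1}`, `Λ₀ = 1` and
`Λ_k = (1/k!)(D₊ + L_{X₁})^{k−1}(X₁)`: for every `k ≥ 1`,
`Λ_k = (1/k)·∑_{s=0}^{k−1} Λ_s·X_{k−s}`. -/
theorem stmt5 (D : Derivation ℚ (MvPolynomial ℕ+ ℚ) (MvPolynomial ℕ+ ℚ))
    (hD : ∀ i : ℕ+, D (X i) = ((i : ℕ) : ℚ) • X (i + 1))
    (Λ : ℕ → MvPolynomial ℕ+ ℚ)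
    (hΛ0 : Λ 0 = 1)
    (hΛ : ∀ k : ℕ, 1 ≤ k → Λ k = (Nat.factorial k : ℚ)⁻¹ •
      (((LinearMap.mulLeft ℚ (X 1) + D.toLinearMap :
          Module.End ℚ (MvPolynomial ℕ+ ℚ)) ^ (k - 1)) (X 1)))
    (k : ℕ) (hk : 1 ≤ k) :
    Λ k = ((k : ℚ)⁻¹) •
      ∑ s ∈ (Finset.range k).attach,
        Λ s.1 * (X (⟨k - s.1, by have := Finset.mem_range.mp s.2; omega⟩ : ℕ+) : MvPolynomial ℕ+ ℚ) := by
  have hC := lamC D Λ hΛ0 hΛ hD k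
  have hkQ : (k : ℚ) ≠ 0 := Nat.cast_ne_zero.mpr (by omega)
  have hsum : ∑ s ∈ (Finset.range k).attach,
      Λ s.1 * (X (⟨k - s.1, by have := Finset.mem_range.mp s.2; omega⟩ : ℕ+) : MvPolynomial ℕ+ ℚ)
      = ∑ s ∈ Finset.range k, Λ s * px (k - s) := by
    rw [← Finset.sum_attach (Finset.range k) (fun s => Λ s * px (k - s))]
    apply Finset.sum_congr rfl
    intro s _
    congr 1
    exact (px_pos _).symm
  rw [hsum, ← hC, smul_smul, inv_mul_cancel₀ hkQ, one_smul]
end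

section
/- Let t, t′ be natural numbers. Then the polynomial identity (x choose t′)·(x choose t) = (t+t′ choose t)·(x choose t+t′) − Σ_{j=1}^{t′} (−1)^j (t+j−1 choose j)·(x choose t′−j)·(x choose t) holds in ℚ[x], where (x choose s) denotes the polynomial x(x−1)⋯(x−s+1)/s!. -/
open Polynomial

/-- The binomial coefficient polynomial `(x choose s) = x(x-1)⋯(x-s+1)/s! ∈ ℚ[x]`. -/
noncomputable def chPoly (s : ℕ) : Polynomial ℚ := ((Nat.factorial s : ℚ)⁻¹) • descPochhammer ℚ s

/-- Pascal's identity for `chPoly`. -/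
lemma chPoly_pascal (m : ℕ) :
    chPoly (m + 1) = (chPoly (m + 1)).comp (X - 1) + (chPoly m).comp (X - 1) := by
  have h := descPochhammer_succ_comp_X_sub_one ℚ m
  unfold chPoly
  rw [smul_comp, smul_comp, h, smul_sub]
  have hm : ((m : ℚ[X]) + 1) = C ((m : ℚ) + 1) := by simp
  rw [smul_eq_mul, hm, ← smul_eq_C_mul, smul_smul]
  have hfac : (((m + 1).factorial : ℚ))⁻¹ * ((m : ℚ) + 1) = ((m.factorial : ℚ))⁻¹ := by
    have h2 : ((m : ℚ) + 1) ≠ 0 := by positivity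
    have h3 : (m.factorial : ℚ) ≠ 0 := by exact_mod_cast Nat.factorial_ne_zero m
    rw [Nat.factorial_succ]
    push_cast
    field_simp
  rw [hfac, sub_add_cancel]

/-- Alternating-sum identity (Vandermonde with negative upper index). -/
lemma chPoly_alt_sum (t : ℕ) : ∀ t' : ℕ,
    ∑ j ∈ Finset.range (t' + 1), ((-1 : ℚ) ^ j * ((t + j - 1).choose j : ℚ)) • chPoly (t' - j)
      = (chPoly t').comp (X - (t : ℚ[X])) := by
  induction t with
  | zero =>
    intro t'
    rw [Finset.sum_eq_single 0]
    · simp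
    · intro j _ hj
      obtain ⟨k, rfl⟩ := Nat.exists_eq_succ_of_ne_zero hj
      simp [Nat.choose_eq_zero_of_lt (Nat.lt_succ_self k)]
    · intro h
      exact absurd (Finset.mem_range.mpr (Nat.succ_pos t')) h
  | succ t ih =>
    intro t'
    induction t' with
    | zero => simp [chPoly, descPochhammer_zero]
    | succ t' ih' =>
      -- peel off the j = 0 term
      rw [Finset.sum_range_succ' _ (t' + 1)]
      have key : ∀ i ∈ Finset.range (t' + 1),
          ((-1 : ℚ) ^ (i + 1) * ((t + 1 + (i + 1) - 1).choose (i + 1) : ℚ)) •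
              chPoly (t' + 1 - (i + 1))
            = ((-1 : ℚ) ^ (i + 1) * ((t + (i + 1) - 1).choose (i + 1) : ℚ)) •
                chPoly (t' + 1 - (i + 1))
              - ((-1 : ℚ) ^ i * ((t + 1 + i - 1).choose i : ℚ)) • chPoly (t' - i) := by
        intro i _
        have h1 : t + 1 + (i + 1) - 1 = (t + i) + 1 := by omega
        have h2 : t + (i + 1) - 1 = t + i := by omega
        have h3 : t + 1 + i - 1 = t + i := by omega
        have h4 : t' + 1 - (i + 1) = t' - i := by omega
        rw [h1, h2, h3, h4, Nat.choose_succ_succ' (t + i) i]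
        push_cast
        rw [pow_succ]
        rw [← sub_smul]
        congr 1
        ring
      rw [Finset.sum_congr rfl key, Finset.sum_sub_distrib, ih']
      have houter : (∑ i ∈ Finset.range (t' + 1),
            ((-1 : ℚ) ^ (i + 1) * ((t + (i + 1) - 1).choose (i + 1) : ℚ)) •
              chPoly (t' + 1 - (i + 1)))
          + ((-1 : ℚ) ^ 0 * ((t + 0 - 1).choose 0 : ℚ)) • chPoly (t' + 1 - 0)
          = (chPoly (t' + 1)).comp (X - (t : ℚ[X])) := by
        rw [← ih (t' + 1), Finset.sum_range_succ' _ (t' + 1)]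
      have hgoal : ((-1 : ℚ) ^ 0 * ((t + 1 + 0 - 1).choose 0 : ℚ)) • chPoly (t' + 1 - 0)
          = ((-1 : ℚ) ^ 0 * ((t + 0 - 1).choose 0 : ℚ)) • chPoly (t' + 1 - 0) := by
        simp
      rw [hgoal]
      rw [sub_add_eq_add_sub, houter]
      -- now: (chPoly (t'+1)).comp (X - t) - (chPoly t').comp (X - (t+1))
      --    = (chPoly (t'+1)).comp (X - (t+1))
      have hp := congrArg (fun p => p.comp (X - (t : ℚ[X]))) (chPoly_pascal t')
      simp only [add_comp, comp_assoc, sub_comp, X_comp, one_comp] at hp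
      have hX : (X : ℚ[X]) - (t : ℚ[X]) - 1 = X - (((t + 1 : ℕ)) : ℚ[X]) := by
        push_cast
        ring
      rw [hX] at hp
      rw [hp]
      ring

/-- Multiplicativity: `chPoly t * (chPoly t').comp (X - t) = C(t+t',t) • chPoly (t+t')`. -/
lemma chPoly_mul_comp (t t' : ℕ) :
    chPoly t * (chPoly t').comp (X - (t : ℚ[X]))
      = ((t + t').choose t : ℚ) • chPoly (t + t') := by
  unfold chPoly
  rw [smul_comp, mul_smul_comm, smul_mul_assoc, descPochhammer_mul, smul_smul, smul_smul]
  congr 1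
  have h := Nat.choose_mul_factorial_mul_factorial (Nat.le_add_right t t')
  have h' : (t + t').choose t * t.factorial * t'.factorial = (t + t').factorial := by
    simpa [Nat.add_sub_cancel_left] using h
  have hq : ((t + t').choose t : ℚ) * (t.factorial : ℚ) * (t'.factorial : ℚ)
      = ((t + t').factorial : ℚ) := by exact_mod_cast congrArg (Nat.cast (R := ℚ)) h'
  have h1 : (t.factorial : ℚ) ≠ 0 := by exact_mod_cast Nat.factorial_ne_zero t
  have h2 : (t'.factorial : ℚ) ≠ 0 := by exact_mod_cast Nat.factorial_ne_zero t'
  have h3 : ((t + t').factorial : ℚ) ≠ 0 := by exact_mod_cast Nat.factorial_ne_zero (t + t')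
  field_simp
  linarith [hq]

/-- Lusztig's identity: for `t, t' ∈ ℕ`,
`(x choose t')(x choose t) = (t+t' choose t)(x choose t+t')
  − ∑_{j=1}^{t'} (−1)^j (t+j−1 choose j)(x choose t'−j)(x choose t)` in `ℚ[x]`. -/
theorem stmt11 (t t' : ℕ) :
    chPoly t' * chPoly t =
      ((t + t').choose t : ℚ) • chPoly (t + t') -
        ∑ j ∈ Finset.Icc 1 t',
          ((-1 : ℚ) ^ j * ((t + j - 1).choose j : ℚ)) • (chPoly (t' - j) * chPoly t) := by
  rw [← chPoly_mul_comp t t', ← chPoly_alt_sum t t', Finset.mul_sum]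
  simp only [mul_smul_comm]
  have hsplit : Finset.range (t' + 1) = insert 0 (Finset.Icc 1 t') := by
    ext j
    simp only [Finset.mem_range, Finset.mem_insert, Finset.mem_Icc]
    omega
  rw [hsplit, Finset.sum_insert (by simp)]
  have hc : ∀ j ∈ Finset.Icc 1 t',
      ((-1 : ℚ) ^ j * ((t + j - 1).choose j : ℚ)) • (chPoly t * chPoly (t' - j))
        = ((-1 : ℚ) ^ j * ((t + j - 1).choose j : ℚ)) • (chPoly (t' - j) * chPoly t) := by
    intro j _
    rw [mul_comm (chPoly t)]
  rw [Finset.sum_congr rfl hc, add_sub_cancel_right]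
  simp [mul_comm]
end

section
/- Let p be a prime, h ≥ 1, and 𝕂 a field of characteristic p. Consider the 𝕂-subspace V of functions ℤ → 𝕂 spanned by the functions x ↦ (x choose t) mod p, for 0 ≤ t < p^h. Then V is closed under pointwise multiplication, i.e. V is a 𝕂-subalgebra of the algebra of functions ℤ → 𝕂. -/
open Finset

/-- Periodicity of the binomial functions mod p. -/
lemma aux_choose_periodic (p h t : ℕ) (hp : p.Prime) (𝕂 : Type*) [Field 𝕂] [CharP 𝕂 p]
    (ht : t < p ^ h) (x : ℤ) :
    ((Ring.choose (x + (p ^ h : ℕ)) t : ℤ) : 𝕂) = ((Ring.choose x t : ℤ) : 𝕂) := by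
  rw [Ring.add_choose_eq t (Commute.all _ _), Int.cast_sum]
  rw [Finset.sum_eq_single (t, 0)]
  · simp
  · intro ij hij hne
    rw [Finset.HasAntidiagonal.mem_antidiagonal] at hij
    have h2 : ij.2 ≠ 0 := by
      intro h0
      apply hne
      have : ij.1 = t := by omega
      exact Prod.ext this h0
    have h2' : ij.2 ≠ p ^ h := by omega
    have hcast : Ring.choose ((p ^ h : ℕ) : ℤ) ij.2 = (((p ^ h).choose ij.2 : ℕ) : ℤ) :=
      Ring.choose_natCast _ _
    rw [Int.cast_mul, hcast]
    have : (((p ^ h).choose ij.2 : ℕ) : 𝕂) = 0 :=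
      (CharP.cast_eq_zero_iff 𝕂 p _).2 (Nat.Prime.dvd_choose_pow hp h2 h2')
    push_cast
    rw [this, mul_zero]
  · intro hmem
    exact absurd (Finset.HasAntidiagonal.mem_antidiagonal.2 (by simp)) hmem

/-- Let `p` be a prime, `h ≥ 1`, and `𝕂` a field of characteristic `p`. The
`𝕂`-subspace `V` of functions `ℤ → 𝕂` spanned by `x ↦ (x choose t) mod p` for
`0 ≤ t < p^h` is closed under pointwise multiplication. -/
theorem stmt12 (p : ℕ) (hp : p.Prime) (h : ℕ) (hh : 1 ≤ h)
    (𝕂 : Type*) [Field 𝕂] [CharP 𝕂 p] :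
    ∀ f ∈ Submodule.span 𝕂
        {f : ℤ → 𝕂 | ∃ t < p ^ h, f = fun x => ((Ring.choose x t : ℤ) : 𝕂)},
      ∀ g ∈ Submodule.span 𝕂
        {f : ℤ → 𝕂 | ∃ t < p ^ h, f = fun x => ((Ring.choose x t : ℤ) : 𝕂)},
      f * g ∈ Submodule.span 𝕂
        {f : ℤ → 𝕂 | ∃ t < p ^ h, f = fun x => ((Ring.choose x t : ℤ) : 𝕂)} := by
  set N : ℕ := p ^ h with hN
  have hN0 : 0 < N := pow_pos hp.pos h
  set S : Set (ℤ → 𝕂) :=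
    {f : ℤ → 𝕂 | ∃ t < p ^ h, f = fun x => ((Ring.choose x t : ℤ) : 𝕂)} with hS
  -- every element of the span is periodic with period N
  have hper : ∀ f ∈ Submodule.span 𝕂 S, Function.Periodic f (N : ℤ) := by
    intro f hf
    induction hf using Submodule.span_induction with
    | mem f hfS =>
      obtain ⟨t, ht, rfl⟩ := hfS
      intro x
      exact aux_choose_periodic p h t hp 𝕂 ht x
    | zero => intro x; rfl
    | add f g _ _ hf hg => intro x; simp [hf x, hg x]
    | smul c f _ hf => intro x; simp [hf x]
  -- periodic functions take value at x % N
  have hmod : ∀ f : ℤ → 𝕂, Function.Periodic f (N : ℤ) → ∀ x : ℤ, f x = f (x % (N : ℤ)) := by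
    intro f hf x
    conv_lhs => rw [← Int.emod_add_ediv_mul x (N : ℤ)]
    exact hf.int_mul (x / (N : ℤ)) (x % (N : ℤ))
  -- every N-periodic function is in the span
  have hspan : ∀ f : ℤ → 𝕂, Function.Periodic f (N : ℤ) → f ∈ Submodule.span 𝕂 S := by
    intro f hf
    set M : Matrix (Fin N) (Fin N) 𝕂 := fun s t => ((s : ℕ).choose (t : ℕ) : 𝕂) with hM
    have hdet : M.det = 1 := by
      rw [Matrix.det_of_lowerTriangular M]
      · apply Finset.prod_eq_one
        intro i _
        simp [hM]
      · intro s t hst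
        have : (s : ℕ) < (t : ℕ) := hst
        simp [hM, Nat.choose_eq_zero_of_lt this]
    have hunit : IsUnit M := Matrix.isUnit_iff_isUnit_det M |>.2 (by rw [hdet]; exact isUnit_one)
    obtain ⟨c, hc⟩ := (Matrix.mulVec_surjective_iff_isUnit.2 hunit) (fun s => f (s : ℤ))
    set g : ℤ → 𝕂 := ∑ t : Fin N, c t • (fun x : ℤ => ((Ring.choose x (t : ℕ) : ℤ) : 𝕂)) with hg
    have hgmem : g ∈ Submodule.span 𝕂 S := by
      apply Submodule.sum_mem
      intro t _
      exact Submodule.smul_mem _ _ (Submodule.subset_span ⟨(t : ℕ), t.2, rfl⟩)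
    have hgf : g = f := by
      have hgper : Function.Periodic g (N : ℤ) := hper g hgmem
      funext x
      have hx1 : 0 ≤ x % (N : ℤ) := Int.emod_nonneg x (by exact_mod_cast hN0.ne')
      have hx2 : x % (N : ℤ) < (N : ℤ) := Int.emod_lt_of_pos x (by exact_mod_cast hN0)
      set s : Fin N := ⟨(x % (N : ℤ)).toNat, by omega⟩ with hs
      have hsx : ((s : ℕ) : ℤ) = x % (N : ℤ) := by simp [hs]; omega
      have hfs : f x = f ((s : ℕ) : ℤ) := by rw [hmod f hf x, hsx]
      have hgs : g x = g ((s : ℕ) : ℤ) := by rw [hmod g hgper x, hsx]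
      rw [hfs, hgs]
      have := congrFun hc s
      simp only [Matrix.mulVec, dotProduct, hM] at this
      rw [← this, hg]
      simp only [Finset.sum_apply, Pi.smul_apply, smul_eq_mul]
      apply Finset.sum_congr rfl
      intro t _
      rw [Ring.choose_natCast]
      push_cast
      ring
    rw [← hgf]; exact hgmem
  intro f hf g hg
  apply hspan
  intro x
  have := hper f hf x
  have := hper g hg x
  simp_all [Pi.mul_apply]
end

section
/- Let 𝕂 be a commutative ring with 1, n ≥ 1, and let f : ℕ^n → 𝕂 be a finitely supported function. If Σ_{λ ∈ ℕ^n} f(λ) · ∏_{i=1}^{n} (μ_i choose λ_i) = 0 in 𝕂 for every μ ∈ ℕ^n, then f = 0. -/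
/-- Let `𝕂` be a commutative ring with 1, `n ≥ 1`, and `f : ℕ^n → 𝕂` a finitely
supported function. If `∑_λ f(λ) ∏_i (μ_i choose λ_i) = 0` in `𝕂` for every `μ ∈ ℕ^n`,
then `f = 0`. -/
theorem stmt13 (𝕂 : Type*) [CommRing 𝕂] (n : ℕ) (hn : 1 ≤ n)
    (f : (Fin n → ℕ) →₀ 𝕂)
    (hf : ∀ μ : Fin n → ℕ,
      (f.sum fun lam c => c * ∏ i, ((μ i).choose (lam i) : 𝕂)) = 0) :
    f = 0 := by
  by_contra h
  obtain ⟨μ, hμ, hmin⟩ := Finset.exists_minimal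
    (Finsupp.support_nonempty_iff.mpr h)
  have hμ0 : f μ ≠ 0 := Finsupp.mem_support_iff.mp hμ
  apply hμ0
  have hsum := hf μ
  rw [Finsupp.sum, Finset.sum_eq_single μ] at hsum
  · simpa using hsum
  · intro lam hlam hne
    have hnle : ¬ lam ≤ μ := by
      intro hle
      rcases hle.lt_or_eq with hlt | heq
      · exact hlt.not_ge (hmin hlam hlt.le)
      · exact hne heq
    obtain ⟨i, hi⟩ := not_forall.mp hnle
    have : μ i < lam i := lt_of_not_ge hi
    rw [Finset.prod_eq_zero (Finset.mem_univ i)]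
    · ring
    · rw [Nat.choose_eq_zero_of_lt this]; norm_num
  · intro habs; exact absurd hμ habs
end
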